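/- Let S be a finite set of points in ℝ^d and z ∈ ℝ^d \ S. Suppose S is a z-containing set and z is in general position with respect to S. Let A be a maximal z-avoiding subset of S and let s ∈ S \ A. Then A has a subset T such that: |T| = d; T ∪ {s} is affinely independent and z lies in the interior of conv(T ∪ {s}) (so conv(T ∪ {s}) is a d-dimensional simplex containing z as an interior point); and there exist a nonzero linear functional f on ℝ^d and a real number c with f(t) = c for every t ∈ T, f(a) ≤ c for every a ∈ A, and f(z) > c (so the hyperplane spanned by T is a facet hyperplane of conv(A) separating A from z). -/

import Mathlib

/-- Points of `ℝ^d`. -/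
abbrev Pt (d : ℕ) := EuclideanSpace ℝ (Fin d)

/-- `X` is `z`-containing: `z` lies in the interior of the convex hull of `X`. -/
def IsZContaining (d : ℕ) (z : Pt d) (X : Set (Pt d)) : Prop :=
  z ∈ interior (convexHull ℝ X)

/-- `X` is `z`-avoiding: `z` does not lie in the interior of the convex hull of `X`. -/
def IsZAvoiding (d : ℕ) (z : Pt d) (X : Set (Pt d)) : Prop :=
  z ∉ interior (convexHull ℝ X)

/-- `𝒞(S)`: the collection of minimal `z`-containing subsets of `S`. -/
def MinContaining (d : ℕ) (z : Pt d) (S : Set (Pt d)) : Set (Set (Pt d)) :=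
  {C | C ⊆ S ∧ IsZContaining d z C ∧ ∀ Y : Set (Pt d), Y ⊂ C → ¬ IsZContaining d z Y}

/-- `𝒜(S)`: the collection of maximal `z`-avoiding subsets of `S`. -/
def MaxAvoiding (d : ℕ) (z : Pt d) (S : Set (Pt d)) : Set (Set (Pt d)) :=
  {A | A ⊆ S ∧ IsZAvoiding d z A ∧ ∀ B : Set (Pt d), B ⊆ S → A ⊂ B → ¬ IsZAvoiding d z B}

/-- `z` is in general position with respect to `S`: for every `X ⊆ S` whose affine span
has dimension less than `d`, `z` does not belong to the affine span of `X`. -/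
def GenPos (d : ℕ) (z : Pt d) (S : Set (Pt d)) : Prop :=
  ∀ X : Set (Pt d), X ⊆ S → Module.finrank ℝ (vectorSpan ℝ X) < d → z ∉ affineSpan ℝ X

open Finset in

lemma isClosed_finsetCone {E : Type*} [NormedAddCommGroup E] [NormedSpace ℝ E]
    [FiniteDimensional ℝ E] (t : Finset E) :
    IsClosed {x : E | ∃ c : E → ℝ, (∀ i ∈ t, 0 ≤ c i) ∧ ∑ i ∈ t, c i • i = x} := by
  classical
  induction t using Finset.strongInduction with
  | _ t ih =>
    by_cases hli : LinearIndependent ℝ (fun i : {x // x ∈ t} => (i : E))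
    · -- linearly independent generators: closed embedding of the orthant
      set φ : ({x // x ∈ t} → ℝ) →ₗ[ℝ] E :=
        Fintype.linearCombination ℝ (fun i : {x // x ∈ t} => (i : E)) with hφ
      have hφapp : ∀ c : {x // x ∈ t} → ℝ, φ c = ∑ i : {x // x ∈ t}, c i • (i : E) := by
        intro c
        simp [hφ, Fintype.linearCombination_apply]
      have hker : LinearMap.ker φ = ⊥ := by
        rw [LinearMap.ker_eq_bot']
        intro c hc
        rw [hφapp] at hc
        funext i
        exact Fintype.linearIndependent_iff.mp hli c hc i
      have hemb := LinearMap.isClosedEmbedding_of_injective hker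
      have himg : {x : E | ∃ c : E → ℝ, (∀ i ∈ t, 0 ≤ c i) ∧ ∑ i ∈ t, c i • i = x}
          = φ '' {c : {x // x ∈ t} → ℝ | ∀ i, 0 ≤ c i} := by
        ext x
        constructor
        · rintro ⟨c, hc0, rfl⟩
          refine ⟨fun i => c i, fun i => hc0 i i.2, ?_⟩
          rw [hφapp]
          exact Finset.sum_coe_sort t (fun i => c i • i)
        · rintro ⟨c, hc0, rfl⟩
          refine ⟨fun x => if h : x ∈ t then c ⟨x, h⟩ else 0, ?_, ?_⟩
          · intro i hi
            simp only [dif_pos hi]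
            exact hc0 _
          · rw [hφapp, ← Finset.sum_coe_sort t]
            apply Finset.sum_congr rfl
            intro i _
            simp only [dif_pos i.2]
      rw [himg]
      apply hemb.isClosedMap
      have hset : {c : {x // x ∈ t} → ℝ | ∀ i, 0 ≤ c i} = ⋂ i, {c | 0 ≤ c i} :=
        Set.setOf_forall _
      rw [hset]
      exact isClosed_iInter fun i => isClosed_le continuous_const (continuous_apply i)
    · -- dependent: reduce to smaller subsets
      have key : ∀ G : E → ℝ, (∑ i ∈ t, G i • i = 0) → (∃ i ∈ t, 0 < G i) →
          IsClosed {x : E | ∃ c : E → ℝ, (∀ i ∈ t, 0 ≤ c i) ∧ ∑ i ∈ t, c i • i = x} := by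
        intro G hG0 hGpos
        set P : Finset E := t.filter (fun i => 0 < G i) with hP
        have hPne : P.Nonempty := by
          obtain ⟨i, hit, hGi⟩ := hGpos
          exact ⟨i, Finset.mem_filter.mpr ⟨hit, hGi⟩⟩
        have hunion : {x : E | ∃ c : E → ℝ, (∀ i ∈ t, 0 ≤ c i) ∧ ∑ i ∈ t, c i • i = x}
            = ⋃ i ∈ P, {x : E | ∃ c : E → ℝ, (∀ j ∈ t.erase i, 0 ≤ c j) ∧
                ∑ j ∈ t.erase i, c j • j = x} := by
          ext x
          simp only [Set.mem_setOf_eq, Set.mem_iUnion]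
          constructor
          · rintro ⟨c, hc0, rfl⟩
            obtain ⟨i₀, hi₀P, hi₀min⟩ := P.exists_min_image (fun i => c i / G i) hPne
            have hGi₀ : 0 < G i₀ := (Finset.mem_filter.mp hi₀P).2
            have hi₀t : i₀ ∈ t := (Finset.mem_filter.mp hi₀P).1
            set r : ℝ := c i₀ / G i₀ with hr
            have hr0 : 0 ≤ r := div_nonneg (hc0 _ hi₀t) hGi₀.le
            set c' : E → ℝ := fun j => c j - r * G j with hc'
            have hc'0 : ∀ j ∈ t, 0 ≤ c' j := by
              intro j hjt
              by_cases hGj : 0 < G j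
              · have hjP : j ∈ P := Finset.mem_filter.mpr ⟨hjt, hGj⟩
                have h1 := hi₀min j hjP
                have h2 : r * G j ≤ c j := by
                  rw [← le_div_iff₀ hGj]; exact h1
                simp only [hc']; linarith
              · push_neg at hGj
                have h1 : r * G j ≤ 0 := mul_nonpos_of_nonneg_of_nonpos hr0 hGj
                have h2 := hc0 j hjt
                simp only [hc']; linarith
            have hc'i₀ : c' i₀ = 0 := by
              simp only [hc', hr]
              field_simp
              ring
            have hsum : ∑ j ∈ t.erase i₀, c' j • j = ∑ j ∈ t, c j • j := by
              rw [Finset.sum_erase _ (by rw [hc'i₀, zero_smul])]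
              have heq : ∑ j ∈ t, c' j • j = ∑ j ∈ t, c j • j - r • ∑ j ∈ t, G j • j := by
                rw [Finset.smul_sum, ← Finset.sum_sub_distrib]
                apply Finset.sum_congr rfl
                intro j _
                simp only [hc', sub_smul, smul_smul]
              rw [heq, hG0, smul_zero, sub_zero]
            exact ⟨i₀, hi₀P, c', fun j hj => hc'0 j (Finset.mem_erase.mp hj).2, hsum⟩
          · rintro ⟨i, hiP, c, hc0, rfl⟩
            have hit : i ∈ t := (Finset.mem_filter.mp hiP).1
            refine ⟨fun j => if j ∈ t.erase i then c j else 0, ?_, ?_⟩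
            · intro j hjt
              beta_reduce
              split_ifs with h
              · exact hc0 j h
              · exact le_rfl
            · rw [← Finset.sum_subset (Finset.erase_subset i t)
                (fun x _ hnx => by simp only [if_neg hnx, zero_smul])]
              apply Finset.sum_congr rfl
              intro j hj
              simp only [if_pos hj]
        rw [hunion]
        exact Set.Finite.isClosed_biUnion (P.finite_toSet) fun i hi =>
          ih (t.erase i) (Finset.erase_ssubset (Finset.mem_filter.mp hi).1)
      obtain ⟨g, hgsum, j, hgj⟩ := Fintype.not_linearIndependent_iff.mp hli
      set G : E → ℝ := fun x => if h : x ∈ t then g ⟨x, h⟩ else 0 with hGdef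
      have hGsum : ∑ i ∈ t, G i • i = 0 := by
        rw [← Finset.sum_coe_sort t (fun i => G i • i), ← hgsum]
        apply Finset.sum_congr rfl
        intro i _
        simp only [hGdef, dif_pos i.2]
      rcases lt_or_ge 0 (g j) with hpos | hneg
      · exact key G hGsum ⟨j, j.2, by simp only [hGdef, dif_pos j.2]; exact hpos⟩
      · have hneg' : g j < 0 := lt_of_le_of_ne hneg hgj
        refine key (-G) ?_ ⟨j, j.2, ?_⟩
        · rw [← neg_zero, ← hGsum, ← Finset.sum_neg_distrib]
          apply Finset.sum_congr rfl
          intro i _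
          simp
        · simp only [Pi.neg_apply, hGdef, dif_pos j.2]
          linarith

/-- Separation of a point from a finitely generated convex cone. -/
lemma cone_separation {E : Type*} [NormedAddCommGroup E] [InnerProductSpace ℝ E]
    [FiniteDimensional ℝ E] (t : Finset E) (v : E)
    (hv : ∀ c : E → ℝ, (∀ i ∈ t, 0 ≤ c i) → ∑ i ∈ t, c i • i ≠ v) :
    ∃ f : E →L[ℝ] ℝ, (∀ i ∈ t, f i ≤ 0) ∧ 0 < f v := by
  classical
  set C : Set E := {x : E | ∃ c : E → ℝ, (∀ i ∈ t, 0 ≤ c i) ∧ ∑ i ∈ t, c i • i = x} with hC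
  have hCconv : Convex ℝ C := by
    intro x hx y hy a b ha hb hab
    obtain ⟨c, hc0, rfl⟩ := hx
    obtain ⟨c', hc'0, rfl⟩ := hy
    refine ⟨fun i => a * c i + b * c' i, fun i hi => add_nonneg (mul_nonneg ha (hc0 i hi)) (mul_nonneg hb (hc'0 i hi)), ?_⟩
    rw [Finset.smul_sum, Finset.smul_sum, ← Finset.sum_add_distrib]
    apply Finset.sum_congr rfl
    intro i _
    rw [add_smul, smul_smul, smul_smul]
  have hCclosed : IsClosed C := isClosed_finsetCone t
  have hvC : v ∉ C := by
    rintro ⟨c, hc0, hcsum⟩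
    exact hv c hc0 hcsum
  obtain ⟨f, u, hfC, hfv⟩ := geometric_hahn_banach_closed_point hCconv hCclosed hvC
  have h0C : (0 : E) ∈ C := ⟨fun _ => 0, fun i _ => le_rfl, by simp⟩
  have hu0 : 0 < u := by simpa using hfC 0 h0C
  refine ⟨f, ?_, ?_⟩
  · intro i hi
    by_contra hfi
    push_neg at hfi
    have hmem : ((u + 1) / f i) • i ∈ C := by
      refine ⟨fun j => if j = i then (u + 1) / f i else 0, ?_, ?_⟩
      · intro j _
        beta_reduce
        split_ifs
        · positivity
        · exact le_rfl
      · rw [Finset.sum_eq_single i (fun j _ hji => by simp [if_neg hji])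
          (fun hni => absurd hi hni)]
        simp
    have := hfC _ hmem
    rw [map_smul, smul_eq_mul, div_mul_cancel₀ _ (ne_of_gt hfi)] at this
    linarith
  · linarith [hfC 0 h0C, hfv]

/-- A positive affine combination over an affine basis is in the interior of hull. -/
lemma mem_interior_of_pos_comb {d : ℕ} {ι : Type*} [Fintype ι]
    (p : ι → EuclideanSpace ℝ (Fin d)) (W : ι → ℝ) (z : EuclideanSpace ℝ (Fin d))
    (hW1 : ∑ i, W i = 1) (hWpos : ∀ i, 0 < W i) (hz : ∑ i, W i • p i = z)
    (hai : AffineIndependent ℝ p) (htop : affineSpan ℝ (Set.range p) = ⊤) :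
    z ∈ interior (convexHull ℝ (Set.range p)) := by
  let b : AffineBasis ι ℝ (EuclideanSpace ℝ (Fin d)) := ⟨p, hai, htop⟩
  have hb : ⇑b = p := rfl
  have hzc : z = Finset.univ.affineCombination ℝ p W := by
    rw [Finset.affineCombination_eq_linear_combination _ _ _ hW1]
    exact hz.symm
  have hrange : Set.range ⇑b = Set.range p := by rw [hb]
  rw [← hrange, b.interior_convexHull]
  intro i
  have : b.coord i z = W i := by
    rw [hzc]
    exact b.coord_apply_combination_of_mem (Finset.mem_univ i) hW1
  rw [this]
  exact hWpos i

lemma not_mem_convexHull_of_avoiding {d : ℕ} {z : Pt d} {S A : Set (Pt d)}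
    (hAS : A ⊆ S) (hgen : GenPos d z S) (havoid : z ∉ interior (convexHull ℝ A)) :
    z ∉ convexHull ℝ A := by
  intro hzA
  obtain ⟨ι, _, p, wgt, hrange, hai, hwpos, hw1, hwsum⟩ :=
    eq_pos_convex_span_of_mem_convexHull hzA
  have hne : Nonempty ι := by
    rcases isEmpty_or_nonempty ι with h | h
    · rw [Finset.univ_eq_empty, Finset.sum_empty] at hw1
      exact absurd hw1 zero_ne_one
    · exact h
  have hcard1 : 1 ≤ Fintype.card ι := Fintype.card_pos
  have hz_span : z ∈ affineSpan ℝ (Set.range p) := by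
    have hzc : z = Finset.univ.affineCombination ℝ p wgt := by
      rw [Finset.affineCombination_eq_linear_combination _ _ _ hw1]
      exact hwsum.symm
    rw [hzc]
    exact affineCombination_mem_affineSpan hw1 p
  by_cases hn : Fintype.card ι ≤ d
  · have hfr : Module.finrank ℝ (vectorSpan ℝ (Set.range p)) = Fintype.card ι - 1 :=
      hai.finrank_vectorSpan (by omega)
    exact hgen (Set.range p) (hrange.trans hAS) (by omega) hz_span
  · have hcard : Fintype.card ι = d + 1 := by
      have h1 : Fintype.card ι ≤ Module.finrank ℝ (vectorSpan ℝ (Set.range p)) + 1 :=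
        hai.card_le_finrank_succ
      have h2 : Module.finrank ℝ (vectorSpan ℝ (Set.range p)) ≤ Module.finrank ℝ (Pt d) :=
        Submodule.finrank_le _
      rw [finrank_euclideanSpace_fin] at h2
      omega
    have htop : affineSpan ℝ (Set.range p) = ⊤ := by
      rw [hai.affineSpan_eq_top_iff_card_eq_finrank_add_one, hcard, finrank_euclideanSpace_fin]
    have hint : z ∈ interior (convexHull ℝ (Set.range p)) :=
      mem_interior_of_pos_comb p wgt z hw1 hwpos hwsum hai htop
    exact havoid (interior_mono (convexHull_mono hrange) hint)

set_option maxHeartbeats 1000000 in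
theorem exists_facet_hyperplane_of_maxAvoiding
    (d : ℕ) (S : Set (Pt d)) (hS : S.Finite) (z : Pt d) (hzS : z ∉ S)
    (hScont : IsZContaining d z S) (hgen : GenPos d z S)
    (A : Set (Pt d)) (hA : A ∈ MaxAvoiding d z S) (s : Pt d) (hs : s ∈ S \ A) :
    ∃ T ⊆ A, T.ncard = d ∧
      AffineIndependent ℝ ((↑) : (T ∪ {s} : Set (Pt d)) → Pt d) ∧
      z ∈ interior (convexHull ℝ (T ∪ {s})) ∧
      ∃ f : Pt d →ₗ[ℝ] ℝ, f ≠ 0 ∧ ∃ c : ℝ,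
        (∀ t ∈ T, f t = c) ∧ (∀ a ∈ A, f a ≤ c) ∧ c < f z := by
  classical
  obtain ⟨hAS, hAavoid, hAmax⟩ := hA
  obtain ⟨hsS, hsA⟩ := hs
  have hzs : z ≠ s := fun h => hzS (h ▸ hsS)
  have hd : 0 < d := by
    by_contra hd0
    push_neg at hd0
    obtain rfl : d = 0 := by omega
    exact hzs (by ext i; exact Fin.elim0 i)
  have hAfin : A.Finite := hS.subset hAS
  -- z is in the interior of conv (A ∪ {s}) by maximality
  have hzint : z ∈ interior (convexHull ℝ (insert s A)) := by
    have hnot : ¬ IsZAvoiding d z (A ∪ {s}) := by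
      apply hAmax (A ∪ {s})
      · exact Set.union_subset hAS (Set.singleton_subset_iff.mpr hsS)
      · rw [Set.union_singleton]
        exact Set.ssubset_insert hsA
    unfold IsZAvoiding at hnot
    rw [not_not, Set.union_singleton] at hnot
    exact hnot
  -- z is not in conv A
  have hzA : z ∉ convexHull ℝ A := not_mem_convexHull_of_avoiding hAS hgen hAavoid
  -- A is nonempty
  have hAne : A.Nonempty := by
    rcases Set.eq_empty_or_nonempty A with h | h
    · exfalso
      rw [h, LawfulSingleton.insert_empty_eq, convexHull_singleton] at hzint
      have hzmem : z ∈ ({s} : Set (Pt d)) := interior_subset hzint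
      exact hzs hzmem
    · exact h
  -- z lies on a segment from s to a point y of conv A
  obtain ⟨y, hy, hzseg⟩ : ∃ y ∈ convexHull ℝ A, z ∈ segment ℝ s y := by
    have h1 := interior_subset hzint
    rw [convexHull_insert hAne] at h1
    simpa using h1
  obtain ⟨pc, q, hp0, hq0, hpq, hz_eq⟩ := hzseg
  have hq_pos : 0 < q := by
    rcases hq0.eq_or_lt with h | h
    · exfalso
      apply hzs
      rw [← hz_eq, ← h, zero_smul, add_zero, show pc = 1 by linarith, one_smul]
    · exact h
  -- the segment parametrization
  set g : ℝ → Pt d := fun u => (1 - u) • s + u • y with hgdef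
  have hgz : g q = z := by
    show (1 - q) • s + q • y = z
    rw [show (1 : ℝ) - q = pc by linarith]
    exact hz_eq
  have hg1 : g 1 = y := by
    show (1 - 1 : ℝ) • s + (1 : ℝ) • y = y
    rw [sub_self, zero_smul, zero_add, one_smul]
  have hg_cont : Continuous g := by
    apply Continuous.add
    · exact (continuous_sub_left _).smul continuous_const
    · exact continuous_id.smul continuous_const
  have hconv_closed : IsClosed (convexHull ℝ A) := (hAfin.isCompact_convexHull ℝ).isClosed
  have hq_le1 : q ≤ 1 := by linarith
  set Q : Set ℝ := Set.Icc q 1 ∩ g ⁻¹' (convexHull ℝ A) with hQdef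
  have hQne : Q.Nonempty := ⟨1, ⟨hq_le1, le_rfl⟩, by rw [Set.mem_preimage, hg1]; exact hy⟩
  have hQclosed : IsClosed Q := isClosed_Icc.inter (hconv_closed.preimage hg_cont)
  have hQbdd : BddBelow Q := ⟨q, fun u hu => hu.1.1⟩
  set ts : ℝ := sInf Q with hts
  have htsQ : ts ∈ Q := hQclosed.csInf_mem hQne hQbdd
  have hq_le : q ≤ ts := htsQ.1.1
  have hts1 : ts ≤ 1 := htsQ.1.2
  set w : Pt d := g ts with hwdef
  have hw : w ∈ convexHull ℝ A := htsQ.2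
  have hq_lt : q < ts := by
    rcases hq_le.eq_or_lt with h | h
    · exfalso
      apply hzA
      rw [← hgz, h]
      exact hw
    · exact h
  have hts_pos : 0 < ts := lt_trans hq_pos hq_lt
  have hmin : ∀ u, q ≤ u → u < ts → g u ∉ convexHull ℝ A := by
    intro u h1 h2 hu
    exact absurd (csInf_le hQbdd ⟨⟨h1, h2.le.trans hts1⟩, hu⟩) (not_le.mpr h2)
  set α : ℝ := 1 - q / ts with hαdef
  have hα0 : 0 < α := by
    have : q / ts < 1 := (div_lt_one hts_pos).mpr hq_lt
    simp only [hαdef]; linarith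
  have hα1 : α < 1 := by
    have : 0 < q / ts := div_pos hq_pos hts_pos
    simp only [hαdef]; linarith
  have hz_w : z = α • s + (1 - α) • w := by
    rw [← hgz, hwdef]
    show (1 - q) • s + q • y = α • s + (1 - α) • ((1 - ts) • s + ts • y)
    have hts0 : ts ≠ 0 := ne_of_gt hts_pos
    match_scalars <;> (simp only [hαdef]; field_simp; try ring)
  have hbet : ∀ β : ℝ, 0 < β → β < 1 → β • z + (1 - β) • w ∉ convexHull ℝ A := by
    intro β hβ0 hβ1 hmem
    have hparam : β • z + (1 - β) • w = g (β * q + (1 - β) * ts) := by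
      rw [← hgz, hwdef]
      show β • ((1 - q) • s + q • y) + (1 - β) • ((1 - ts) • s + ts • y)
          = (1 - (β * q + (1 - β) * ts)) • s + (β * q + (1 - β) * ts) • y
      match_scalars <;> ring
    rw [hparam] at hmem
    refine hmin _ ?_ ?_ hmem
    · nlinarith
    · nlinarith
  -- cone separation
  set A' : Finset (Pt d) := hAfin.toFinset with hA'def
  have hA'mem : ∀ a, a ∈ A' ↔ a ∈ A := fun a => hAfin.mem_toFinset
  set tim : Finset (Pt d) := A'.image (fun a => a - w) with htimdef
  have hv : ∀ c : Pt d → ℝ, (∀ i ∈ tim, 0 ≤ c i) → ∑ i ∈ tim, c i • i ≠ z - w := by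
    intro c hc0 hcsum
    have hinj : ∀ x ∈ A', ∀ y' ∈ A', x - w = y' - w → x = y' := fun x _ y' _ h =>
      sub_left_injective h
    rw [Finset.sum_image hinj] at hcsum
    set M : ℝ := ∑ a ∈ A', c (a - w) with hMdef
    have hc'0 : ∀ a ∈ A', 0 ≤ c (a - w) := fun a ha =>
      hc0 _ (Finset.mem_image_of_mem _ ha)
    have hM0 : 0 ≤ M := Finset.sum_nonneg hc'0
    have hkey : ∑ a ∈ A', c (a - w) • a = (z - w) + M • w := by
      have hexp : ∑ a ∈ A', c (a - w) • (a - w) = ∑ a ∈ A', c (a - w) • a - M • w := by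
        rw [hMdef, Finset.sum_smul, ← Finset.sum_sub_distrib]
        exact Finset.sum_congr rfl fun a _ => smul_sub _ _ _
      rw [hexp] at hcsum
      rw [← hcsum]
      abel
    by_cases hM : M = 0
    · have hall : ∀ a ∈ A', c (a - w) = 0 :=
        (Finset.sum_eq_zero_iff_of_nonneg hc'0).mp (by rw [← hMdef]; exact hM)
      have hzw0 : z - w = 0 := by
        rw [← hcsum]
        exact Finset.sum_eq_zero fun a ha => by rw [hall a ha, zero_smul]
      apply hzA
      rw [show z = w by rw [← sub_eq_zero]; exact hzw0]
      exact hw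
    · have hMpos : 0 < M := lt_of_le_of_ne hM0 (Ne.symm hM)
      have hk : A'.centerMass (fun a => c (a - w)) id ∈ convexHull ℝ A :=
        A'.centerMass_mem_convexHull hc'0 (by rw [← hMdef]; exact hMpos)
          (fun a ha => (hA'mem a).mp ha)
      have hk_eq : A'.centerMass (fun a => c (a - w)) id = M⁻¹ • (z - w) + w := by
        rw [Finset.centerMass, ← hMdef]
        simp only [id_eq]
        rw [hkey, smul_add, smul_smul, inv_mul_cancel₀ hM, one_smul]
      rcases le_or_gt M 1 with hM1 | hM1
      · apply hzA
        have hzcomb : z = M • (A'.centerMass (fun a => c (a - w)) id) + (1 - M) • w := by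
          rw [hk_eq, smul_add, smul_smul, mul_inv_cancel₀ hM, one_smul, sub_smul, one_smul]
          abel
        rw [hzcomb]
        exact (convex_convexHull ℝ A) hk hw hM0 (by linarith) (by ring)
      · refine hbet M⁻¹ (inv_pos.mpr hMpos) ?_ ?_
        · rw [inv_lt_one₀ hMpos]
          exact hM1
        · have heq : M⁻¹ • z + (1 - M⁻¹) • w = M⁻¹ • (z - w) + w := by
            rw [smul_sub, sub_smul, one_smul]
            abel
          rw [heq, ← hk_eq]
          exact hk
  obtain ⟨f, hfneg, hfpos⟩ := cone_separation tim (z - w) hv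
  -- properties of f
  have hfa : ∀ a ∈ A, f a ≤ f w := by
    intro a ha
    have := hfneg (a - w) (Finset.mem_image_of_mem _ ((hA'mem a).mpr ha))
    rw [map_sub] at this
    linarith
  have hfz : f w < f z := by
    have := hfpos
    rw [map_sub] at this
    linarith
  -- w is in the convex hull of the face A ∩ {f = f w}
  have hwA' : w ∈ convexHull ℝ (A' : Set (Pt d)) := by
    rwa [hA'def, hAfin.coe_toFinset]
  rw [Finset.convexHull_eq] at hwA'
  obtain ⟨wt, hwt0, hwt1, hwtc⟩ := hwA'
  have hwsum : ∑ a ∈ A', wt a • a = w := by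
    rw [← hwtc, Finset.centerMass, hwt1]
    simp
  have hfw_sum : ∑ a ∈ A', wt a * f a = f w := by
    rw [← hwsum, map_sum]
    exact Finset.sum_congr rfl fun a _ => by rw [map_smul, smul_eq_mul]
  have hzero : ∑ a ∈ A', wt a * (f w - f a) = 0 := by
    have : ∑ a ∈ A', wt a * (f w - f a)
        = (∑ a ∈ A', wt a) * f w - ∑ a ∈ A', wt a * f a := by
      rw [Finset.sum_mul, ← Finset.sum_sub_distrib]
      exact Finset.sum_congr rfl fun a _ => by ring
    rw [this, hwt1, hfw_sum, one_mul, sub_self]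
  have hface : ∀ a ∈ A', wt a ≠ 0 → f a = f w := by
    intro a ha hne
    have hterm := (Finset.sum_eq_zero_iff_of_nonneg
      (fun a ha => mul_nonneg (hwt0 a ha)
        (sub_nonneg.mpr (hfa a ((hA'mem a).mp ha))))).mp hzero a ha
    rcases mul_eq_zero.mp hterm with h | h
    · exact absurd h hne
    · linarith [sub_eq_zero.mp h]
  set t2 : Finset (Pt d) := A'.filter (fun a => wt a ≠ 0) with ht2def
  have hwt2sum : ∑ a ∈ t2, wt a = 1 := by
    rw [ht2def, Finset.sum_filter_ne_zero]
    exact hwt1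
  have hw_t2 : w ∈ convexHull ℝ (t2 : Set (Pt d)) := by
    have hmem := t2.centerMass_mem_convexHull (w := wt)
      (fun a ha => hwt0 a (Finset.filter_subset _ _ ha))
      (by rw [hwt2sum]; norm_num) (z := id) (fun a ha => Finset.mem_coe.mpr ha)
    have hcm : t2.centerMass wt id = w := by
      rw [Finset.centerMass, hwt2sum]
      simp only [inv_one, one_smul, id]
      rw [ht2def, Finset.sum_filter_of_ne (fun x _ hx => by
        intro h0
        apply hx
        rw [h0, zero_smul])]
      exact hwsum
    rwa [hcm] at hmem
  -- Caratheodory on the face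
  obtain ⟨ι₂, _, p₂, μ, hrange₂, hai₂, hμpos, hμ1, hμsum⟩ :=
    eq_pos_convex_span_of_mem_convexHull hw_t2
  set T : Set (Pt d) := Set.range p₂ with hTdef
  have hT_t2 : ∀ i : ι₂, p₂ i ∈ t2 := fun i => by
    have := hrange₂ (Set.mem_range_self i)
    exact Finset.mem_coe.mp this
  have hTA : T ⊆ A := by
    rintro x ⟨i, rfl⟩
    exact (hA'mem _).mp (Finset.filter_subset _ _ (hT_t2 i))
  have hTH : ∀ x ∈ T, f x = f w := by
    rintro x ⟨i, rfl⟩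
    have hmem := hT_t2 i
    rw [ht2def, Finset.mem_filter] at hmem
    exact hface _ hmem.1 hmem.2
  have hι₂ne : Nonempty ι₂ := by
    rcases isEmpty_or_nonempty ι₂ with h | h
    · rw [Finset.univ_eq_empty, Finset.sum_empty] at hμ1
      exact absurd hμ1 zero_ne_one
    · exact h
  -- the combined family
  set qf : Option ι₂ → Pt d := fun o => match o with
    | none => s
    | some i => p₂ i
    with hqfdef
  set W : Option ι₂ → ℝ := fun o => match o with
    | none => α
    | some i => (1 - α) * μ i
    with hWdef
  have hW1 : ∑ o, W o = 1 := by
    rw [Fintype.sum_option]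
    show α + ∑ i, (1 - α) * μ i = 1
    rw [← Finset.mul_sum, hμ1, mul_one]
    ring
  have hWpos : ∀ o, 0 < W o := by
    rintro (_ | i)
    · exact hα0
    · exact mul_pos (by linarith) (hμpos i)
  have hqz : ∑ o, W o • qf o = z := by
    rw [Fintype.sum_option]
    show α • s + ∑ i, ((1 - α) * μ i) • p₂ i = z
    have : ∑ i, ((1 - α) * μ i) • p₂ i = (1 - α) • ∑ i, μ i • p₂ i := by
      rw [Finset.smul_sum]
      exact Finset.sum_congr rfl fun i _ => by rw [smul_smul]
    rw [this, hμsum, ← hz_w]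
  have hrangeq : Set.range qf = T ∪ {s} := by
    rw [Set.union_singleton]
    ext x
    constructor
    · rintro ⟨(_ | i), rfl⟩
      · exact Set.mem_insert _ _
      · exact Set.mem_insert_of_mem _ (Set.mem_range_self i)
    · rintro (rfl | ⟨i, rfl⟩)
      · exact ⟨none, rfl⟩
      · exact ⟨some i, rfl⟩
  have hz_spanq : z ∈ affineSpan ℝ (Set.range qf) := by
    have hzc : z = Finset.univ.affineCombination ℝ qf W := by
      rw [Finset.affineCombination_eq_linear_combination _ _ _ hW1]
      exact hqz.symm
    rw [hzc]
    exact affineCombination_mem_affineSpan hW1 qf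
  have hTS : T ∪ {s} ⊆ S :=
    Set.union_subset (hTA.trans hAS) (Set.singleton_subset_iff.mpr hsS)
  have hge : d ≤ Module.finrank ℝ (vectorSpan ℝ (Set.range qf)) := by
    by_contra h
    push_neg at h
    exact hgen (Set.range qf) (by rw [hrangeq]; exact hTS) h hz_spanq
  -- upper bound on dim of T
  set fl : Pt d →ₗ[ℝ] ℝ := f.toLinearMap with hfldef
  have hflapp : ∀ x, fl x = f x := fun x => rfl
  have hker : vectorSpan ℝ T ≤ LinearMap.ker fl := by
    rw [vectorSpan_def]
    rw [Submodule.span_le]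
    rintro v ⟨a, ha, b, hb, rfl⟩
    rw [SetLike.mem_coe, LinearMap.mem_ker]
    have : fl (a -ᵥ b) = f a - f b := by rw [hflapp]; exact map_sub f a b
    rw [this, hTH a ha, hTH b hb, sub_self]
  have hkerrank : Module.finrank ℝ (LinearMap.ker fl) < d := by
    have hr := fl.finrank_range_add_finrank_ker
    rw [finrank_euclideanSpace_fin] at hr
    have hrange_ne : LinearMap.range fl ≠ ⊥ := by
      intro hbot
      have hmem : fl (z - w) ∈ LinearMap.range fl := LinearMap.mem_range_self _ _
      rw [hbot, Submodule.mem_bot] at hmem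
      rw [hflapp, map_sub] at hmem
      linarith
    have : Module.finrank ℝ (LinearMap.range fl) ≠ 0 := by
      intro h0
      exact hrange_ne (Submodule.finrank_eq_zero.mp h0)
    omega
  have hTrank : Module.finrank ℝ (vectorSpan ℝ T) < d :=
    lt_of_le_of_lt (Submodule.finrank_mono hker) hkerrank
  have hcard2_le : Fintype.card ι₂ ≤ d := by
    have h1 := hai₂.card_le_finrank_succ
    have h2 : Module.finrank ℝ (vectorSpan ℝ (Set.range p₂)) < d := by
      rw [← hTdef]
      exact hTrank
    omega
  have hcard2_ge : d ≤ Fintype.card ι₂ := by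
    have := finrank_vectorSpan_range_le ℝ qf (n := Fintype.card ι₂)
      (by rw [Fintype.card_option])
    omega
  have hcard2 : Fintype.card ι₂ = d := le_antisymm hcard2_le hcard2_ge
  have hai_qf : AffineIndependent ℝ qf := by
    rw [affineIndependent_iff_not_finrank_vectorSpan_le ℝ qf
      (show Fintype.card (Option ι₂) = (d - 1) + 2 by rw [Fintype.card_option, hcard2]; omega)]
    intro hle
    omega
  have htopq : affineSpan ℝ (Set.range qf) = ⊤ := by
    rw [hai_qf.affineSpan_eq_top_iff_card_eq_finrank_add_one, Fintype.card_option, hcard2,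
      finrank_euclideanSpace_fin]
  have hz_int : z ∈ interior (convexHull ℝ (T ∪ {s})) := by
    rw [← hrangeq]
    exact mem_interior_of_pos_comb qf W z hW1 hWpos hqz hai_qf htopq
  have hai_final : AffineIndependent ℝ ((↑) : (T ∪ {s} : Set (Pt d)) → Pt d) :=
    hrangeq ▸ hai_qf.range
  have hTcard : T.ncard = d := by
    rw [hTdef, ← Nat.card_coe_set_eq, Nat.card_range_of_injective hai₂.injective,
      Nat.card_eq_fintype_card, hcard2]
  have hfl0 : fl ≠ 0 := by
    intro h0
    have h1 : fl z = 0 := by rw [h0]; rfl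
    have h2 : fl w = 0 := by rw [h0]; rfl
    rw [hflapp] at h1 h2
    linarith
  exact ⟨T, hTA, hTcard, hai_final, hz_int, fl, hfl0, f w,
    fun t ht => by rw [hflapp]; exact hTH t ht,
    fun a ha => by rw [hflapp]; exact hfa a ha,
    by rw [hflapp]; exact hfz⟩
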